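/- Let g(t) = e^{-π t²/(2σ²)} be a Gaussian window and f(t) = e^{2πiω₁t} + e^{2πiω₂t} with ω₁ ≠ ω₂. Then the time-invariant STFT W(f,g)(x,ω) = ∫ f(t) conj(g(t-x)) e^{-2πiω(t-x)} dt equals √(2)σ ( e^{2πixω₁} e^{-2πσ²(ω-ω₁)²} + e^{2πixω₂} e^{-2πσ²(ω-ω₂)²} ) up to the common normalization constant, and its zero set is exactly { (x_k, ω_m) : k ∈ ℤ } where ω_m = (ω₁+ω₂)/2 and x_k = (1+2k)/(2(ω₁-ω₂)). -/

import Mathlib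

open MeasureTheory Complex Real

/-- The time-invariant STFT
`W(f,g)(x,ω) = ∫ f(t) conj(g(t-x)) e^{-2πiω(t-x)} dt`. -/
noncomputable def stftTI (f g : ℝ → ℂ) (x ω : ℝ) : ℂ :=
  ∫ t : ℝ, f t * (starRingEnd ℂ) (g (t - x)) *
    Complex.exp (-2 * Real.pi * Complex.I * ω * (t - x))

lemma term_int (σ : ℝ) (hσ : 0 < σ) (x ω ωj : ℝ) :
    ∫ t : ℝ, Complex.exp (2 * Real.pi * Complex.I * ωj * t) *
      (Real.exp (-(Real.pi * (t - x) ^ 2) / (2 * σ ^ 2)) : ℂ) *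
      Complex.exp (-2 * Real.pi * Complex.I * ω * (↑t - ↑x)) =
    (Real.sqrt 2 * σ : ℝ) * (Complex.exp (2 * Real.pi * Complex.I * x * ωj) *
      (Real.exp (-2 * Real.pi * σ ^ 2 * (ω - ωj) ^ 2) : ℂ)) := by
  have hσ2 : (σ : ℂ) ≠ 0 := ofReal_ne_zero.mpr hσ.ne'
  have hπ : (Real.pi : ℂ) ≠ 0 := ofReal_ne_zero.mpr Real.pi_ne_zero
  set b : ℂ := -((Real.pi : ℂ) / (2 * (σ : ℂ) ^ 2)) with hb_def
  have hb' : b = ((-(Real.pi / (2 * σ ^ 2)) : ℝ) : ℂ) := by rw [hb_def]; push_cast; ring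
  have hb : b.re < 0 := by
    have h0 : (0:ℝ) < Real.pi / (2 * σ ^ 2) := by positivity
    rw [hb', Complex.ofReal_re]; linarith
  set c : ℂ := 2 * Real.pi * Complex.I * ((ωj : ℂ) - (ω : ℂ)) with hc_def
  set d : ℂ := 2 * Real.pi * Complex.I * (x : ℂ) * (ωj : ℂ) with hd_def
  have key : ∀ t : ℝ, Complex.exp (2 * Real.pi * Complex.I * ωj * t) *
      (Real.exp (-(Real.pi * (t - x) ^ 2) / (2 * σ ^ 2)) : ℂ) *
      Complex.exp (-2 * Real.pi * Complex.I * ω * (↑t - ↑x)) =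
      (fun u : ℝ => Complex.exp (b * (u : ℂ) ^ 2 + c * (u : ℂ) + d)) (t - x) := by
    intro t
    simp only
    rw [Complex.ofReal_exp, ← Complex.exp_add, ← Complex.exp_add]
    congr 1
    rw [hb_def, hc_def, hd_def]
    push_cast
    field_simp
    ring
  simp_rw [key]
  rw [MeasureTheory.integral_sub_right_eq_self
    (fun u : ℝ => Complex.exp (b * (u : ℂ) ^ 2 + c * (u : ℂ) + d)) x,
    integral_cexp_quadratic hb c d]
  have h1 : ((Real.pi : ℂ) / -b) = ((2 * σ ^ 2 : ℝ) : ℂ) := by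
    rw [hb_def, neg_neg]
    push_cast
    field_simp
  have h2 : ((Real.pi : ℂ) / -b) ^ (1/2 : ℂ) = ((Real.sqrt 2 * σ : ℝ) : ℂ) := by
    rw [h1, show (1/2 : ℂ) = ((1/2 : ℝ) : ℂ) by norm_num,
      ← Complex.ofReal_cpow (by positivity)]
    congr 1
    rw [← Real.sqrt_eq_rpow, Real.sqrt_mul (by norm_num : (0:ℝ) ≤ 2), Real.sqrt_sq hσ.le]
  rw [h2]
  congr 1
  have hc2 : c ^ 2 = ((-(4 * Real.pi ^ 2 * (ωj - ω) ^ 2) : ℝ) : ℂ) := by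
    rw [hc_def]
    push_cast
    ring_nf
    simp only [Complex.I_sq]
    ring
  have h3 : c ^ 2 / (4 * b) = ((2 * Real.pi * σ ^ 2 * (ω - ωj) ^ 2 : ℝ) : ℂ) := by
    have hne4 : (4 : ℂ) * ((-(Real.pi / (2 * σ ^ 2)) : ℝ) : ℂ) ≠ 0 := by
      apply mul_ne_zero (by norm_num)
      rw [Complex.ofReal_ne_zero]
      have h0 : (0:ℝ) < Real.pi / (2 * σ ^ 2) := by positivity
      exact neg_ne_zero.mpr h0.ne'
    rw [hc2, hb', div_eq_iff hne4]
    push_cast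
    field_simp
    ring
  rw [h3, hd_def, Complex.ofReal_exp, ← Complex.exp_add]
  congr 1
  push_cast
  ring

lemma term_integrable (σ : ℝ) (hσ : 0 < σ) (x ω ωj : ℝ) :
    Integrable (fun t : ℝ => Complex.exp (2 * Real.pi * Complex.I * ωj * t) *
      (Real.exp (-(Real.pi * (t - x) ^ 2) / (2 * σ ^ 2)) : ℂ) *
      Complex.exp (-2 * Real.pi * Complex.I * ω * (↑t - ↑x))) := by
  have hσ2 : (σ : ℂ) ≠ 0 := ofReal_ne_zero.mpr hσ.ne'
  set b : ℂ := -((Real.pi : ℂ) / (2 * (σ : ℂ) ^ 2)) with hb_def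
  have hb' : b = ((-(Real.pi / (2 * σ ^ 2)) : ℝ) : ℂ) := by rw [hb_def]; push_cast; ring
  have hb : b.re < 0 := by
    have h0 : (0:ℝ) < Real.pi / (2 * σ ^ 2) := by positivity
    rw [hb', Complex.ofReal_re]; linarith
  set c : ℂ := 2 * Real.pi * Complex.I * ((ωj : ℂ) - (ω : ℂ)) with hc_def
  set d : ℂ := 2 * Real.pi * Complex.I * (x : ℂ) * (ωj : ℂ) with hd_def
  have key : ∀ t : ℝ, Complex.exp (2 * Real.pi * Complex.I * ωj * t) *
      (Real.exp (-(Real.pi * (t - x) ^ 2) / (2 * σ ^ 2)) : ℂ) *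
      Complex.exp (-2 * Real.pi * Complex.I * ω * (↑t - ↑x)) =
      (fun u : ℝ => Complex.exp (b * (u : ℂ) ^ 2 + c * (u : ℂ) + d)) (t - x) := by
    intro t
    simp only
    rw [Complex.ofReal_exp, ← Complex.exp_add, ← Complex.exp_add]
    congr 1
    rw [hb_def, hc_def, hd_def]
    push_cast
    field_simp
    ring
  simp_rw [key]
  exact (integrable_cexp_quadratic' hb c d).comp_sub_right x

/-- For the two-sinusoid signal `f(t) = e^{2πiω₁t} + e^{2πiω₂t}` (with `ω₁ ≠ ω₂`)
and the Gaussian window `g(t) = e^{-πt²/(2σ²)}`, the time-invariant STFT equals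
`√2 σ (e^{2πixω₁} e^{-2πσ²(ω-ω₁)²} + e^{2πixω₂} e^{-2πσ²(ω-ω₂)²})`, and its zero
set is exactly `{(x_k, ω_m) : k ∈ ℤ}`, with `ω_m = (ω₁+ω₂)/2` and
`x_k = (1+2k)/(2(ω₁-ω₂))`. -/
theorem stft_two_sinusoids_gaussian (σ ω₁ ω₂ : ℝ) (hσ : 0 < σ) (hne : ω₁ ≠ ω₂)
    (f g : ℝ → ℂ)
    (hf : f = fun t : ℝ => Complex.exp (2 * Real.pi * Complex.I * ω₁ * t) +
      Complex.exp (2 * Real.pi * Complex.I * ω₂ * t))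
    (hg : g = fun t : ℝ => (Real.exp (-(Real.pi * t ^ 2) / (2 * σ ^ 2)) : ℂ)) :
    (∀ x ω : ℝ, stftTI f g x ω =
      (Real.sqrt 2 * σ : ℝ) *
        (Complex.exp (2 * Real.pi * Complex.I * x * ω₁) *
            (Real.exp (-2 * Real.pi * σ ^ 2 * (ω - ω₁) ^ 2) : ℂ) +
         Complex.exp (2 * Real.pi * Complex.I * x * ω₂) *
            (Real.exp (-2 * Real.pi * σ ^ 2 * (ω - ω₂) ^ 2) : ℂ))) ∧
    (∀ x ω : ℝ, stftTI f g x ω = 0 ↔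
      ω = (ω₁ + ω₂) / 2 ∧ ∃ k : ℤ, x = (1 + 2 * (k : ℝ)) / (2 * (ω₁ - ω₂))) := by
  subst hf hg
  have part1 : ∀ x ω : ℝ, stftTI
      (fun t : ℝ => Complex.exp (2 * Real.pi * Complex.I * ω₁ * t) +
        Complex.exp (2 * Real.pi * Complex.I * ω₂ * t))
      (fun t : ℝ => (Real.exp (-(Real.pi * t ^ 2) / (2 * σ ^ 2)) : ℂ)) x ω =
      (Real.sqrt 2 * σ : ℝ) *
        (Complex.exp (2 * Real.pi * Complex.I * x * ω₁) *
            (Real.exp (-2 * Real.pi * σ ^ 2 * (ω - ω₁) ^ 2) : ℂ) +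
         Complex.exp (2 * Real.pi * Complex.I * x * ω₂) *
            (Real.exp (-2 * Real.pi * σ ^ 2 * (ω - ω₂) ^ 2) : ℂ)) := by
    intro x ω
    rw [stftTI]
    simp only [Complex.conj_ofReal, add_mul]
    rw [MeasureTheory.integral_add (term_integrable σ hσ x ω ω₁) (term_integrable σ hσ x ω ω₂),
      term_int σ hσ x ω ω₁, term_int σ hσ x ω ω₂, mul_add]
  refine ⟨part1, fun x ω => ?_⟩
  rw [part1 x ω]
  have hA : ((Real.sqrt 2 * σ : ℝ) : ℂ) ≠ 0 := by
    rw [Complex.ofReal_ne_zero]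
    positivity
  have hsub : ω₁ - ω₂ ≠ 0 := sub_ne_zero.mpr hne
  rw [mul_eq_zero, or_iff_right hA]
  set E₁ : ℝ := Real.exp (-2 * Real.pi * σ ^ 2 * (ω - ω₁) ^ 2) with hE1
  set E₂ : ℝ := Real.exp (-2 * Real.pi * σ ^ 2 * (ω - ω₂) ^ 2) with hE2
  set e₁ : ℂ := Complex.exp (2 * Real.pi * Complex.I * x * ω₁) with he1
  set e₂ : ℂ := Complex.exp (2 * Real.pi * Complex.I * x * ω₂) with he2
  have habs1 : ‖e₁‖ = 1 := by
    rw [he1, show (2 * (Real.pi:ℂ) * Complex.I * x * ω₁) = ((2 * Real.pi * x * ω₁ : ℝ) : ℂ) * Complex.I by push_cast; ring]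
    exact Complex.norm_exp_ofReal_mul_I _
  have habs2 : ‖e₂‖ = 1 := by
    rw [he2, show (2 * (Real.pi:ℂ) * Complex.I * x * ω₂) = ((2 * Real.pi * x * ω₂ : ℝ) : ℂ) * Complex.I by push_cast; ring]
    exact Complex.norm_exp_ofReal_mul_I _
  constructor
  · intro h
    -- norms give E₁ = E₂
    have hEq : E₁ = E₂ := by
      have h' : e₁ * (E₁ : ℂ) = -(e₂ * (E₂ : ℂ)) := by linear_combination h
      have := congrArg (‖·‖) h'
      rw [norm_mul, norm_neg, norm_mul, habs1, habs2, one_mul, one_mul,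
        Complex.norm_real, Complex.norm_real, Real.norm_eq_abs, Real.norm_eq_abs, abs_of_pos (Real.exp_pos _),
        abs_of_pos (Real.exp_pos _)] at this
      exact this
    have hsq : (ω - ω₁) ^ 2 = (ω - ω₂) ^ 2 := by
      have := Real.exp_injective (hE1 ▸ hE2 ▸ hEq)
      have hc : (0:ℝ) < 2 * Real.pi * σ ^ 2 := by positivity
      nlinarith [this]
    have hω : ω = (ω₁ + ω₂) / 2 := by
      have h5 : (ω₁ - ω₂) * (2 * ω - ω₁ - ω₂) = 0 := by linear_combination -hsq
      rcases mul_eq_zero.mp h5 with h6 | h6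
      · exact absurd h6 hsub
      · linarith
    refine ⟨hω, ?_⟩
    -- deduce e₁ + e₂ = 0
    have hE1ne : ((E₁ : ℝ) : ℂ) ≠ 0 := Complex.ofReal_ne_zero.mpr (Real.exp_pos _).ne'
    have hsum : e₁ + e₂ = 0 := by
      have : (e₁ + e₂) * (E₁ : ℂ) = 0 := by
        rw [hEq] at h ⊢
        linear_combination h
      exact (mul_eq_zero.mp this).resolve_right hE1ne
    have hdiv : Complex.exp (2 * Real.pi * Complex.I * x * ω₁ - 2 * Real.pi * Complex.I * x * ω₂) = Complex.exp ((Real.pi:ℂ) * Complex.I) := by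
      rw [Complex.exp_sub, Complex.exp_pi_mul_I, ← he1, ← he2]
      rw [div_eq_iff (Complex.exp_ne_zero _)]
      linear_combination hsum
    rw [Complex.exp_eq_exp_iff_exists_int] at hdiv
    obtain ⟨n, hn⟩ := hdiv
    refine ⟨n, ?_⟩
    have hre : (2 * Real.pi * x * (ω₁ - ω₂) : ℝ) = Real.pi * (1 + 2 * n) := by
      have hn' : ((2 * Real.pi * x * (ω₁ - ω₂) : ℝ) : ℂ) * Complex.I = ((Real.pi * (1 + 2 * n) : ℝ) : ℂ) * Complex.I := by
        push_cast
        linear_combination hn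
      have := mul_right_cancel₀ Complex.I_ne_zero hn'
      exact_mod_cast this
    have hπ : Real.pi ≠ 0 := Real.pi_ne_zero
    have hre' : 2 * x * (ω₁ - ω₂) = 1 + 2 * n :=
      mul_left_cancel₀ hπ (by linear_combination hre)
    rw [eq_div_iff (mul_ne_zero two_ne_zero hsub)]
    linear_combination hre'
  · rintro ⟨hω, n, hx⟩
    have hEq : E₁ = E₂ := by
      rw [hE1, hE2, hω]; congr 1; ring
    have hx2 : 2 * Real.pi * x * (ω₁ - ω₂) = Real.pi * (1 + 2 * n) := by
      rw [hx]; field_simp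
    have he : e₁ = -e₂ := by
      rw [he1, he2, show (2 * (Real.pi:ℂ) * Complex.I * x * ω₁) =
        2 * (Real.pi:ℂ) * Complex.I * x * ω₂ + ((2 * Real.pi * x * (ω₁ - ω₂) : ℝ) : ℂ) * Complex.I by push_cast; ring,
        hx2, Complex.exp_add]
      rw [show (((Real.pi * (1 + 2 * (n:ℝ)) : ℝ)) : ℂ) * Complex.I =
        (Real.pi : ℂ) * Complex.I + (n : ℂ) * (2 * Real.pi * Complex.I) by push_cast; ring,
        Complex.exp_add, Complex.exp_pi_mul_I, Complex.exp_int_mul_two_pi_mul_I]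
      ring
    rw [he, hEq]
    ring
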